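/- The map σ defined on generators of GL_m(2) by σ(a)=a+kc, σ(b)=b+k(d−a)−k²c, σ(c)=c, σ(d)=d−kc extends to a well-defined algebra endomorphism of GL_m(2), i.e. it preserves the Jordanian relations [c,d]=−mc², [c,a]=−mc², [c,b]=−m(ac+cd), [d,a]=−m(d−a)c, [d,b]=−m(d²−δ), [b,a]=−m(δ−a²) with δ=ad−bc+mac; moreover σ is an automorphism with inverse a↦a−kc, b↦b−k(d−a)−k²c, c↦c, d↦d+kc. -/

import Mathlib

open FreeAlgebra

/-- The Jordanian relations of GL_m(2), generators 0=a, 1=b, 2=c, 3=d,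
with δ = ad − bc + mac. -/
inductive GLm2Rel (K : Type) [Field K] (m : K) :
    FreeAlgebra K (Fin 4) → FreeAlgebra K (Fin 4) → Prop
  | cd : GLm2Rel K m (ι K 2 * ι K 3 - ι K 3 * ι K 2) (-(m • (ι K 2 * ι K 2)))
  | ca : GLm2Rel K m (ι K 2 * ι K 0 - ι K 0 * ι K 2) (-(m • (ι K 2 * ι K 2)))
  | cb : GLm2Rel K m (ι K 2 * ι K 1 - ι K 1 * ι K 2)
      (-(m • (ι K 0 * ι K 2 + ι K 2 * ι K 3)))
  | da : GLm2Rel K m (ι K 3 * ι K 0 - ι K 0 * ι K 3)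
      (-(m • ((ι K 3 - ι K 0) * ι K 2)))
  | db : GLm2Rel K m (ι K 3 * ι K 1 - ι K 1 * ι K 3)
      (-(m • (ι K 3 * ι K 3 -
        (ι K 0 * ι K 3 - ι K 1 * ι K 2 + m • (ι K 0 * ι K 2)))))
  | ba : GLm2Rel K m (ι K 1 * ι K 0 - ι K 0 * ι K 1)
      (-(m • ((ι K 0 * ι K 3 - ι K 1 * ι K 2 + m • (ι K 0 * ι K 2)) - ι K 0 * ι K 0)))

/-- The Jordanian quantum group GL_m(2). -/
def GLm2 (K : Type) [Field K] (m : K) : Type := RingQuot (GLm2Rel K m)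

noncomputable instance (K : Type) [Field K] (m : K) : Ring (GLm2 K m) :=
  inferInstanceAs (Ring (RingQuot (GLm2Rel K m)))

noncomputable instance (K : Type) [Field K] (m : K) : Algebra K (GLm2 K m) :=
  inferInstanceAs (Algebra K (RingQuot (GLm2Rel K m)))

/-- The generators a, b, c, d of the Jordanian GL_m(2). -/
noncomputable def GLm2Gen (K : Type) [Field K] (m : K) (i : Fin 4) : GLm2 K m :=
  RingQuot.mkAlgHom K (GLm2Rel K m) (ι K i)

section Aux

variable (K : Type) [Field K] (m k : K)

local notation "𝐀" => GLm2Gen K m 0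
local notation "𝐁" => GLm2Gen K m 1
local notation "𝐂" => GLm2Gen K m 2
local notation "𝐃" => GLm2Gen K m 3

private lemma gen_def (i : Fin 4) :
    RingQuot.mkAlgHom K (GLm2Rel K m) (ι K i) = GLm2Gen K m i := rfl

private lemma rel_DC : 𝐃 * 𝐂 = 𝐂 * 𝐃 + m • (𝐂 * 𝐂) := by
  have h := RingQuot.mkAlgHom_rel K (GLm2Rel.cd (K := K) (m := m))
  simp only [map_sub, map_mul, map_neg, map_smul, gen_def] at h
  rw [sub_eq_iff_eq_add] at h
  have h' : 𝐂 * 𝐃 = -(m • (𝐂 * 𝐂)) + 𝐃 * 𝐂 := h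
  rw [h']; module

private lemma rel_CA : 𝐂 * 𝐀 = 𝐀 * 𝐂 - m • (𝐂 * 𝐂) := by
  have h := RingQuot.mkAlgHom_rel K (GLm2Rel.ca (K := K) (m := m))
  simp only [map_sub, map_mul, map_neg, map_smul, gen_def] at h
  rw [sub_eq_iff_eq_add] at h
  have h' : 𝐂 * 𝐀 = -(m • (𝐂 * 𝐂)) + 𝐀 * 𝐂 := h
  rw [h']; module

private lemma rel_CB : 𝐂 * 𝐁 = 𝐁 * 𝐂 - m • (𝐀 * 𝐂) - m • (𝐂 * 𝐃) := by
  have h := RingQuot.mkAlgHom_rel K (GLm2Rel.cb (K := K) (m := m))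
  simp only [map_sub, map_mul, map_neg, map_smul, map_add, gen_def] at h
  rw [sub_eq_iff_eq_add] at h
  have h' : 𝐂 * 𝐁 = -(m • (𝐀 * 𝐂 + 𝐂 * 𝐃)) + 𝐁 * 𝐂 := h
  rw [h']; module

private lemma rel_DA :
    𝐃 * 𝐀 = 𝐀 * 𝐃 - m • (𝐂 * 𝐃) - (m * m) • (𝐂 * 𝐂) + m • (𝐀 * 𝐂) := by
  have h := RingQuot.mkAlgHom_rel K (GLm2Rel.da (K := K) (m := m))
  simp only [map_sub, map_mul, map_neg, map_smul, map_add, gen_def] at h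
  rw [sub_eq_iff_eq_add] at h
  have h' : 𝐃 * 𝐀 = -(m • ((𝐃 - 𝐀) * 𝐂)) + 𝐀 * 𝐃 := h
  rw [h', sub_mul, rel_DC]; module

private lemma rel_DB :
    𝐃 * 𝐁 = 𝐁 * 𝐃 - m • (𝐃 * 𝐃) + m • (𝐀 * 𝐃) - m • (𝐁 * 𝐂)
      + (m * m) • (𝐀 * 𝐂) := by
  have h := RingQuot.mkAlgHom_rel K (GLm2Rel.db (K := K) (m := m))
  simp only [map_sub, map_mul, map_neg, map_smul, map_add, gen_def] at h
  rw [sub_eq_iff_eq_add] at h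
  have h' : 𝐃 * 𝐁 = -(m • (𝐃 * 𝐃 - (𝐀 * 𝐃 - 𝐁 * 𝐂 + m • (𝐀 * 𝐂)))) + 𝐁 * 𝐃 := h
  rw [h']; module

private lemma rel_BA :
    𝐁 * 𝐀 = 𝐀 * 𝐁 - m • (𝐀 * 𝐃) + m • (𝐁 * 𝐂) - (m * m) • (𝐀 * 𝐂)
      + m • (𝐀 * 𝐀) := by
  have h := RingQuot.mkAlgHom_rel K (GLm2Rel.ba (K := K) (m := m))
  simp only [map_sub, map_mul, map_neg, map_smul, map_add, gen_def] at h
  rw [sub_eq_iff_eq_add] at h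
  have h' : 𝐁 * 𝐀 = -(m • (𝐀 * 𝐃 - 𝐁 * 𝐂 + m • (𝐀 * 𝐂) - 𝐀 * 𝐀)) + 𝐀 * 𝐁 := h
  rw [h']; module

private noncomputable def gvec : Fin 4 → GLm2 K m :=
  ![𝐀 + k • 𝐂, 𝐁 + k • (𝐃 - 𝐀) - (k ^ 2) • 𝐂, 𝐂, 𝐃 - k • 𝐂]

private lemma gvec0 : gvec K m k 0 = 𝐀 + k • 𝐂 := rfl
private lemma gvec1 : gvec K m k 1 = 𝐁 + k • (𝐃 - 𝐀) - (k ^ 2) • 𝐂 := rfl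
private lemma gvec2 : gvec K m k 2 = 𝐂 := rfl
private lemma gvec3 : gvec K m k 3 = 𝐃 - k • 𝐂 := rfl

private noncomputable def sigmaHom : GLm2 K m →ₐ[K] GLm2 K m :=
  RingQuot.liftAlgHom K ⟨FreeAlgebra.lift K (gvec K m k), by
    intro x y h
    cases h <;>
      (simp only [map_sub, map_mul, map_neg, map_smul, map_add,
        FreeAlgebra.lift_ι_apply, gvec0, gvec1, gvec2, gvec3];
       simp only [mul_add, add_mul, mul_sub, sub_mul, smul_mul_assoc,
        mul_smul_comm, smul_add, smul_sub, smul_smul,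
        rel_CA, rel_CB, rel_DA, rel_DB, rel_DC, rel_BA];
       module)⟩

private lemma sigmaHom_gen (i : Fin 4) :
    sigmaHom K m k (GLm2Gen K m i) = gvec K m k i := by
  refine (RingQuot.liftAlgHom_mkAlgHom_apply _ _ _ _).trans ?_
  exact FreeAlgebra.lift_ι_apply _ _

private lemma comp_gen (i : Fin 4) :
    sigmaHom K m k (sigmaHom K m (-k) (GLm2Gen K m i)) = GLm2Gen K m i := by
  have h0 : sigmaHom K m k (sigmaHom K m (-k) (GLm2Gen K m 0)) = GLm2Gen K m 0 := by
    simp only [sigmaHom_gen, gvec0, gvec1, gvec2, gvec3, map_add, map_sub, map_smul]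
    match_scalars <;> ring
  have h1 : sigmaHom K m k (sigmaHom K m (-k) (GLm2Gen K m 1)) = GLm2Gen K m 1 := by
    simp only [sigmaHom_gen, gvec0, gvec1, gvec2, gvec3, map_add, map_sub, map_smul]
    match_scalars <;> ring
  have h2 : sigmaHom K m k (sigmaHom K m (-k) (GLm2Gen K m 2)) = GLm2Gen K m 2 := by
    simp only [sigmaHom_gen, gvec0, gvec1, gvec2, gvec3, map_add, map_sub, map_smul]
  have h3 : sigmaHom K m k (sigmaHom K m (-k) (GLm2Gen K m 3)) = GLm2Gen K m 3 := by
    simp only [sigmaHom_gen, gvec0, gvec1, gvec2, gvec3, map_add, map_sub, map_smul]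
    match_scalars <;> ring
  fin_cases i
  exacts [h0, h1, h2, h3]

private lemma sigma_comp :
    (sigmaHom K m k).comp (sigmaHom K m (-k)) = AlgHom.id K (GLm2 K m) := by
  apply RingQuot.ringQuot_ext'
  apply FreeAlgebra.hom_ext
  funext i
  exact comp_gen K m k i

end Aux

/-- The map a↦a+kc, b↦b+k(d−a)−k²c, c↦c, d↦d−kc extends to a well-defined
algebra automorphism of the Jordanian GL_m(2), with inverse a↦a−kc,
b↦b−k(d−a)−k²c, c↦c, d↦d+kc. -/
theorem jordanian_sigma_automorphism (K : Type) [Field K] (m k : K) :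
    ∃ σ : GLm2 K m ≃ₐ[K] GLm2 K m,
      σ (GLm2Gen K m 0) = GLm2Gen K m 0 + k • GLm2Gen K m 2 ∧
      σ (GLm2Gen K m 1) = GLm2Gen K m 1 + k • (GLm2Gen K m 3 - GLm2Gen K m 0)
          - (k ^ 2) • GLm2Gen K m 2 ∧
      σ (GLm2Gen K m 2) = GLm2Gen K m 2 ∧
      σ (GLm2Gen K m 3) = GLm2Gen K m 3 - k • GLm2Gen K m 2 ∧
      σ.symm (GLm2Gen K m 0) = GLm2Gen K m 0 - k • GLm2Gen K m 2 ∧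
      σ.symm (GLm2Gen K m 1) = GLm2Gen K m 1 - k • (GLm2Gen K m 3 - GLm2Gen K m 0)
          - (k ^ 2) • GLm2Gen K m 2 ∧
      σ.symm (GLm2Gen K m 2) = GLm2Gen K m 2 ∧
      σ.symm (GLm2Gen K m 3) = GLm2Gen K m 3 + k • GLm2Gen K m 2 := by
  have h1 := sigma_comp K m k
  have h2 := sigma_comp K m (-k)
  rw [neg_neg] at h2
  set σ := AlgEquiv.ofAlgHom (sigmaHom K m k) (sigmaHom K m (-k)) h1 h2 with hσ
  have hf : ∀ x, σ x = sigmaHom K m k x := fun _ => rfl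
  have hb : ∀ x, σ.symm x = sigmaHom K m (-k) x := fun _ => rfl
  refine ⟨σ, ?_, ?_, ?_, ?_, ?_, ?_, ?_, ?_⟩ <;>
    simp only [hf, hb, sigmaHom_gen, gvec0, gvec1, gvec2, gvec3] <;>
    (match_scalars <;> ring)
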